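/- If a synchronizing automaton 𝒜 with n ≥ 2 states is semisimple, then Fs(𝒜) ∖ Rad(𝒜) ≠ ∅; consequently min{Rnk(ℐ_i) : i ∈ [1,k]} = Fr(𝒜). -/

import Mathlib

open scoped BigOperators

set_option synthInstance.maxHeartbeats 1000000
set_option maxHeartbeats 1000000

noncomputable section

/-- Action of a word on a state: `q · u`. -/
def actW {Q A : Type*} (δ : Q → A → Q) (q : Q) (u : List A) : Q :=
  u.foldl δ q

/-- The image `Q · u` of the full state set under a word. -/
def imageSet {Q A : Type*} [Fintype Q] [DecidableEq Q] (δ : Q → A → Q) (u : List A) :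
    Finset Q :=
  Finset.image (fun q => actW δ q u) Finset.univ

/-- The rank `rk(u) = |Q · u|` of a word. -/
def wordRank {Q A : Type*} [Fintype Q] [DecidableEq Q] (δ : Q → A → Q) (u : List A) : ℕ :=
  (imageSet δ u).card

/-- A word is reset (synchronizing) if `|Q · u| = 1`. -/
def IsReset {Q A : Type*} [Fintype Q] [DecidableEq Q] (δ : Q → A → Q) (u : List A) : Prop :=
  wordRank δ u = 1

/-- The automaton is synchronizing if it admits a reset word. -/
def IsSynchronizing {Q A : Type*} [Fintype Q] [DecidableEq Q] (δ : Q → A → Q) : Prop :=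
  ∃ u : List A, IsReset δ u

/-- `Syn(𝒜)`, the set of reset words. -/
def SynWords {Q A : Type*} [Fintype Q] [DecidableEq Q] (δ : Q → A → Q) : Set (List A) :=
  {u | IsReset δ u}

/-- The hyperplane `w⊥ = {v ∈ ℂQ : ∑ q, v q = 0}`. -/
def Wperp (Q : Type*) [Fintype Q] : Submodule ℂ (Q → ℂ) :=
  LinearMap.ker (∑ q : Q, (LinearMap.proj q : (Q → ℂ) →ₗ[ℂ] ℂ))

theorem mem_Wperp {Q : Type*} [Fintype Q] (v : Q → ℂ) :
    v ∈ Wperp Q ↔ ∑ q : Q, v q = 0 := by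
  simp [Wperp, LinearMap.mem_ker, LinearMap.sum_apply]

/-- The (right) action of a word on row vectors `v ↦ v·π(u)`. -/
def piLin {Q A : Type*} [Fintype Q] [DecidableEq Q] (δ : Q → A → Q) (u : List A) :
    (Q → ℂ) →ₗ[ℂ] (Q → ℂ) where
  toFun v := fun p => ∑ q ∈ Finset.univ.filter (fun q => actW δ q u = p), v q
  map_add' := by
    intro a b; funext p; simp [Finset.sum_add_distrib]
  map_smul' := by
    intro c v; funext p; simp [Finset.mul_sum]

theorem piLin_mem {Q A : Type*} [Fintype Q] [DecidableEq Q] (δ : Q → A → Q) (u : List A) :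
    ∀ v ∈ Wperp Q, piLin δ u v ∈ Wperp Q := by
  intro v hv
  rw [mem_Wperp] at hv ⊢
  have h := Finset.sum_fiberwise (Finset.univ : Finset Q) (fun q => actW δ q u) v
  calc ∑ p : Q, piLin δ u v p
      = ∑ p : Q, ∑ q ∈ Finset.univ.filter (fun q => actW δ q u = p), v q := rfl
    _ = ∑ q : Q, v q := h
    _ = 0 := hv

/-- The endomorphism of `w⊥` induced by a word. -/
def rhoEnd {Q A : Type*} [Fintype Q] [DecidableEq Q] (δ : Q → A → Q) (u : List A) :
    Module.End ℂ (Wperp Q) :=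
  (piLin δ u).restrict (piLin_mem δ u)

/-- The representation `ρ : Σ* → End(w⊥)`; we record it in the multiplicative opposite so
that `ρ (u ++ v) = ρ u * ρ v` (the paper's right-action convention). -/
def rho {Q A : Type*} [Fintype Q] [DecidableEq Q] (δ : Q → A → Q) (u : List A) :
    (Module.End ℂ (Wperp Q))ᵐᵒᵖ :=
  MulOpposite.op (rhoEnd δ u)

/-- `ℛ`, the ℂ-subalgebra generated by `ρ(Σ*)`. -/
def Ralg {Q A : Type*} [Fintype Q] [DecidableEq Q] (δ : Q → A → Q) :
    Subalgebra ℂ (Module.End ℂ (Wperp Q))ᵐᵒᵖ :=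
  Algebra.adjoin ℂ (Set.range (rho δ))

/-- `ρ(u)` seen as an element of `ℛ`. -/
def rhoR {Q A : Type*} [Fintype Q] [DecidableEq Q] (δ : Q → A → Q) (u : List A) :
    Ralg δ :=
  ⟨rho δ u, Algebra.subset_adjoin (Set.mem_range_self u)⟩

/-- The Jacobson radical `Rad(ℛ)` of `ℛ`, realised as a subset of the ambient algebra via
the standard characterisation: `x ∈ Rad(ℛ)` iff `x ∈ ℛ` and for every `y ∈ ℛ` the element
`1 - y * x` is left-invertible in `ℛ`. -/
def RadSet {Q A : Type*} [Fintype Q] [DecidableEq Q] (δ : Q → A → Q) :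
    Set (Module.End ℂ (Wperp Q))ᵐᵒᵖ :=
  {x | x ∈ Ralg δ ∧ ∀ y ∈ Ralg δ, ∃ z ∈ Ralg δ, z * (1 - y * x) = 1}

/-- `Rad(𝒜)`: the set of radical words, i.e. words `u` with `ρ(u) ∈ Rad(ℛ)`. -/
def RadWords {Q A : Type*} [Fintype Q] [DecidableEq Q] (δ : Q → A → Q) : Set (List A) :=
  {u | rho δ u ∈ RadSet δ}

/-- The automaton is semisimple when `Rad(𝒜) = Syn(𝒜)`. -/
def IsSemisimple {Q A : Type*} [Fintype Q] [DecidableEq Q] (δ : Q → A → Q) : Prop :=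
  RadWords δ = SynWords δ

/-- The `t`-packing number `D(t,r,n)`: the maximum size of a family of `r`-subsets of an
`n`-set in which every `t`-subset is contained in at most one member. -/
def packingNumber (t r n : ℕ) : ℕ :=
  sSup {m | ∃ F : Finset (Finset (Fin n)), F.card = m ∧ (∀ S ∈ F, S.card = r) ∧
    ∀ T : Finset (Fin n), T.card = t → (F.filter fun S => T ⊆ S).card ≤ 1}

/-- The former-rank `Fr(𝒜)`: the least rank of a non-reset word. -/
def formerRank {Q A : Type*} [Fintype Q] [DecidableEq Q] (δ : Q → A → Q) : ℕ :=
  sInf {m | ∃ u : List A, ¬ IsReset δ u ∧ wordRank δ u = m}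

/-- `Fs(𝒜)`: the set of former-synchronizing words. -/
def Fs {Q A : Type*} [Fintype Q] [DecidableEq Q] (δ : Q → A → Q) : Set (List A) :=
  {u | wordRank δ u = formerRank δ}

/-- `θ_i(u)`: the image of `ρ(u)` in the `i`-th Wedderburn–Artin matrix component, where
`e : ℛ → ∏ i, M_{n_i}(ℂ)` is the quotient map `ψ` followed by the fixed isomorphism. -/
def theta {Q A : Type*} [Fintype Q] [DecidableEq Q] (δ : Q → A → Q) {k : ℕ} {nn : Fin k → ℕ}
    (e : Ralg δ →ₐ[ℂ] ∀ i : Fin k, Matrix (Fin (nn i)) (Fin (nn i)) ℂ)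
    (u : List A) (i : Fin k) : Matrix (Fin (nn i)) (Fin (nn i)) ℂ :=
  e (rhoR δ u) i

/-- `supp(v) = {i : θ_i(v) ≠ 0}`. -/
def suppW {Q A : Type*} [Fintype Q] [DecidableEq Q] (δ : Q → A → Q) {k : ℕ} {nn : Fin k → ℕ}
    (e : Ralg δ →ₐ[ℂ] ∀ i : Fin k, Matrix (Fin (nn i)) (Fin (nn i)) ℂ)
    (v : List A) : Set (Fin k) :=
  {i | theta δ e v i ≠ 0}

/-- `u ∈ Σ* v Σ*`, i.e. `v` is a factor of `u`. -/
def InFactor {A : Type*} (v u : List A) : Prop :=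
  ∃ a b : List A, u = a ++ v ++ b

/-- `u` is a `v`-minimal word: `u ∈ Σ*vΣ*`, `supp(u)` is nonempty, and `supp(u)` is minimal
among the nonempty supports of words in `Σ*vΣ*`. -/
def IsVMinimal {Q A : Type*} [Fintype Q] [DecidableEq Q] (δ : Q → A → Q) {k : ℕ}
    {nn : Fin k → ℕ}
    (e : Ralg δ →ₐ[ℂ] ∀ i : Fin k, Matrix (Fin (nn i)) (Fin (nn i)) ℂ)
    (v u : List A) : Prop :=
  InFactor v u ∧ (suppW δ e u).Nonempty ∧
    ∀ z : List A, InFactor v z → suppW δ e z ⊆ suppW δ e u →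
      suppW δ e z = ∅ ∨ suppW δ e z = suppW δ e u

/-- The `i`-th factor monoid `ℳ_i = θ_i(Σ*)`. -/
def factorMonoid {Q A : Type*} [Fintype Q] [DecidableEq Q] (δ : Q → A → Q) {k : ℕ}
    {nn : Fin k → ℕ}
    (e : Ralg δ →ₐ[ℂ] ∀ i : Fin k, Matrix (Fin (nn i)) (Fin (nn i)) ℂ)
    (i : Fin k) : Set (Matrix (Fin (nn i)) (Fin (nn i)) ℂ) :=
  Set.range fun u : List A => theta δ e u i

/-- A two-sided ideal of the (sub)monoid `M`. -/
def IsSetIdeal {X : Type*} [Mul X] (M I : Set X) : Prop :=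
  I ⊆ M ∧ ∀ a ∈ M, ∀ x ∈ I, a * x ∈ I ∧ x * a ∈ I

/-- `I` is a `0`-minimal (two-sided) ideal of the monoid `M`. -/
def IsZeroMinimalIdeal {X : Type*} [Mul X] [Zero X] (M I : Set X) : Prop :=
  IsSetIdeal M I ∧ (0 : X) ∈ I ∧ I ≠ {0} ∧
    ∀ J : Set X, IsSetIdeal M J → (0 : X) ∈ J → J ⊆ I → J ≠ {0} → J = I

/-- `Rnk_i(g) = min {rk(u) : θ_i(u) = g}`. -/
def rnkElt {Q A : Type*} [Fintype Q] [DecidableEq Q] (δ : Q → A → Q) {k : ℕ}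
    {nn : Fin k → ℕ}
    (e : Ralg δ →ₐ[ℂ] ∀ i : Fin k, Matrix (Fin (nn i)) (Fin (nn i)) ℂ)
    (i : Fin k) (g : Matrix (Fin (nn i)) (Fin (nn i)) ℂ) : ℕ :=
  sInf {m | ∃ u : List A, theta δ e u i = g ∧ wordRank δ u = m}

/-- `Rnk(ℐ_i) = min {Rnk_i(g) : g ∈ ℐ_i ∖ {0}}`. -/
def rnkIdeal {Q A : Type*} [Fintype Q] [DecidableEq Q] (δ : Q → A → Q) {k : ℕ}
    {nn : Fin k → ℕ}
    (e : Ralg δ →ₐ[ℂ] ∀ i : Fin k, Matrix (Fin (nn i)) (Fin (nn i)) ℂ)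
    (i : Fin k) (I : Set (Matrix (Fin (nn i)) (Fin (nn i)) ℂ)) : ℕ :=
  sInf {m | ∃ g ∈ I, g ≠ 0 ∧ rnkElt δ e i g = m}

/-- `w` `u`-represents `g`: `w ∈ Σ*uΣ*`, `θ_i(w) = g`, and either `g = 0` or `rk(w)` is
minimum among all words with the first two properties. -/
def URepresents {Q A : Type*} [Fintype Q] [DecidableEq Q] (δ : Q → A → Q) {k : ℕ}
    {nn : Fin k → ℕ}
    (e : Ralg δ →ₐ[ℂ] ∀ i : Fin k, Matrix (Fin (nn i)) (Fin (nn i)) ℂ)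
    (u : List A) (i : Fin k) (w : List A) (g : Matrix (Fin (nn i)) (Fin (nn i)) ℂ) : Prop :=
  InFactor u w ∧ theta δ e w i = g ∧
    (g = 0 ∨ ∀ w' : List A, InFactor u w' → theta δ e w' i = g → wordRank δ w ≤ wordRank δ w')

/-- The relation `σ_i` on `ℐ_i`. -/
def sigmaRel {Q A : Type*} [Fintype Q] [DecidableEq Q] (δ : Q → A → Q) {k : ℕ}
    {nn : Fin k → ℕ}
    (e : Ralg δ →ₐ[ℂ] ∀ i : Fin k, Matrix (Fin (nn i)) (Fin (nn i)) ℂ)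
    (i : Fin k) (u : List A)
    (g f : Matrix (Fin (nn i)) (Fin (nn i)) ℂ) : Prop :=
  g = f ∨ ∃ w₁ w₂ : List A, URepresents δ e u i w₁ g ∧ URepresents δ e u i w₂ f ∧
    1 < (imageSet δ w₁ ∩ imageSet δ w₂).card

/-- `T ⊆ [1,k]` is a core. -/
def IsCore {Q A : Type*} [Fintype Q] [DecidableEq Q] (δ : Q → A → Q) {k : ℕ}
    {nn : Fin k → ℕ}
    (e : Ralg δ →ₐ[ℂ] ∀ i : Fin k, Matrix (Fin (nn i)) (Fin (nn i)) ℂ)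
    (T : Set (Fin k)) : Prop :=
  ∀ x : List A, (∀ i ∈ T, theta δ e x i = 0) → ∀ i : Fin k, theta δ e x i = 0

/-- A minimal core. -/
def IsMinimalCore {Q A : Type*} [Fintype Q] [DecidableEq Q] (δ : Q → A → Q) {k : ℕ}
    {nn : Fin k → ℕ}
    (e : Ralg δ →ₐ[ℂ] ∀ i : Fin k, Matrix (Fin (nn i)) (Fin (nn i)) ℂ)
    (T : Set (Fin k)) : Prop :=
  IsCore δ e T ∧ ∀ T' : Set (Fin k), T' ⊆ T → IsCore δ e T' → T' = T

/-- An automaton congruence. -/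
def IsCongruence {Q A : Type*} (δ : Q → A → Q) (σ : Q → Q → Prop) : Prop :=
  Equivalence σ ∧ ∀ q p : Q, σ q p → ∀ u : List A, σ (actW δ q u) (actW δ p u)

/-- A simple automaton: the only congruences are the identity and the universal relation. -/
def IsSimple {Q A : Type*} (δ : Q → A → Q) : Prop :=
  ∀ σ : Q → Q → Prop, IsCongruence δ σ → σ = Eq ∨ σ = fun _ _ => True


section AuxLemmas

open scoped Pointwise

variable {Q A : Type*} [Fintype Q] [DecidableEq Q] (δ : Q → A → Q)

theorem actW_append (q : Q) (a b : List A) :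
    actW δ q (a ++ b) = actW δ (actW δ q a) b :=
  List.foldl_append ..

theorem piLin_apply' (u : List A) (v : Q → ℂ) (p : Q) :
    piLin δ u v p = ∑ q ∈ Finset.univ.filter (fun q => actW δ q u = p), v q := rfl

theorem piLin_append (a b : List A) :
    piLin δ (a ++ b) = (piLin δ b).comp (piLin δ a) := by
  apply LinearMap.ext; intro v; funext p
  show (∑ q ∈ Finset.univ.filter (fun q => actW δ q (a ++ b) = p), v q)
      = ∑ q ∈ Finset.univ.filter (fun q => actW δ q b = p),
          ∑ r ∈ Finset.univ.filter (fun r => actW δ r a = q), v r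
  rw [Finset.sum_fiberwise_eq_sum_filter]
  refine Finset.sum_congr ?_ (fun _ _ => rfl)
  apply Finset.filter_congr
  intro q _
  simp [actW_append]

theorem piLin_nil : piLin δ ([] : List A) = LinearMap.id := by
  apply LinearMap.ext; intro v; funext p
  show (∑ q ∈ Finset.univ.filter (fun q => actW δ q [] = p), v q) = v p
  rw [Finset.sum_filter, Finset.sum_eq_single p]
  · simp [actW]
  · intro b _ hb; simp [actW, hb]
  · simp

theorem rhoEnd_append (a b : List A) :
    rhoEnd δ (a ++ b) = rhoEnd δ b * rhoEnd δ a := by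
  apply LinearMap.ext
  rintro ⟨v, hv⟩
  apply Subtype.ext
  show piLin δ (a ++ b) v = piLin δ b (piLin δ a v)
  rw [piLin_append]; rfl

theorem rhoEnd_nil : rhoEnd δ ([] : List A) = 1 := by
  apply LinearMap.ext
  rintro ⟨v, hv⟩
  apply Subtype.ext
  show piLin δ [] v = v
  rw [piLin_nil]; rfl

theorem rho_append (a b : List A) : rho δ (a ++ b) = rho δ a * rho δ b := by
  rw [rho, rho, rho, rhoEnd_append, MulOpposite.op_mul]

theorem rho_nil : rho δ ([] : List A) = 1 := by
  rw [rho, rhoEnd_nil, MulOpposite.op_one]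

theorem rhoR_append (a b : List A) : rhoR δ (a ++ b) = rhoR δ a * rhoR δ b :=
  Subtype.ext (rho_append δ a b)

theorem rhoR_nil : rhoR δ ([] : List A) = 1 :=
  Subtype.ext (rho_nil δ)

theorem theta_append {k : ℕ} {nn : Fin k → ℕ}
    (e : Ralg δ →ₐ[ℂ] ∀ i : Fin k, Matrix (Fin (nn i)) (Fin (nn i)) ℂ)
    (a b : List A) (i : Fin k) :
    theta δ e (a ++ b) i = theta δ e a i * theta δ e b i := by
  rw [theta, rhoR_append, map_mul]; rfl

theorem theta_nil {k : ℕ} {nn : Fin k → ℕ}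
    (e : Ralg δ →ₐ[ℂ] ∀ i : Fin k, Matrix (Fin (nn i)) (Fin (nn i)) ℂ) (i : Fin k) :
    theta δ e ([] : List A) i = 1 := by
  rw [theta, rhoR_nil, map_one]; rfl

theorem wordRank_factor_le (x u z : List A) :
    wordRank δ (x ++ u ++ z) ≤ wordRank δ u := by
  have h : imageSet δ (x ++ u ++ z) ⊆ Finset.image (fun p => actW δ p z) (imageSet δ u) := by
    intro p hp
    simp only [imageSet, Finset.mem_image] at hp ⊢
    obtain ⟨q, -, rfl⟩ := hp
    exact ⟨actW δ (actW δ q x) u, ⟨actW δ q x, Finset.mem_univ _, rfl⟩, by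
      rw [actW_append, actW_append]⟩
  calc wordRank δ (x ++ u ++ z) ≤ _ := Finset.card_le_card h
    _ ≤ wordRank δ u := Finset.card_image_le

theorem mul_mem_span_factorMonoid {k : ℕ} {nn : Fin k → ℕ}
    (e : Ralg δ →ₐ[ℂ] ∀ i : Fin k, Matrix (Fin (nn i)) (Fin (nn i)) ℂ) (i : Fin k)
    {X Y : Matrix (Fin (nn i)) (Fin (nn i)) ℂ}
    (hX : X ∈ Submodule.span ℂ (factorMonoid δ e i))
    (hY : Y ∈ Submodule.span ℂ (factorMonoid δ e i)) :
    X * Y ∈ Submodule.span ℂ (factorMonoid δ e i) := by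
  have h := Submodule.mul_mem_mul hX hY
  rw [Submodule.span_mul_span] at h
  refine Submodule.span_le.mpr ?_ h
  rintro z ⟨z1, hz1, z2, hz2, rfl⟩
  obtain ⟨u, rfl⟩ := hz1
  obtain ⟨v, rfl⟩ := hz2
  exact Submodule.subset_span ⟨u ++ v, theta_append δ e u v i⟩

theorem theta_mem_span {k : ℕ} {nn : Fin k → ℕ}
    (e : Ralg δ →ₐ[ℂ] ∀ i : Fin k, Matrix (Fin (nn i)) (Fin (nn i)) ℂ) (i : Fin k)
    (x : Ralg δ) : e x i ∈ Submodule.span ℂ (factorMonoid δ e i) := by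
  obtain ⟨y, hy⟩ := x
  induction hy using Algebra.adjoin_induction with
  | mem z hz =>
      obtain ⟨u, rfl⟩ := hz
      exact Submodule.subset_span ⟨u, rfl⟩
  | algebraMap r =>
      have h1 : e (algebraMap ℂ (Ralg δ) r) i = r • (1 : Matrix (Fin (nn i)) (Fin (nn i)) ℂ) := by
        rw [AlgHom.commutes]
        simp [Pi.algebraMap_apply, Algebra.algebraMap_eq_smul_one]
      show e ((algebraMap ℂ (Ralg δ)) r) i ∈ _
      rw [h1]
      exact Submodule.smul_mem _ r (Submodule.subset_span ⟨[], theta_nil δ e i⟩)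
  | add z w hz hw hz' hw' =>
      have : e (⟨z, hz⟩ + ⟨w, hw⟩ : Ralg δ) i = e ⟨z, hz⟩ i + e ⟨w, hw⟩ i := by
        rw [map_add]; rfl
      exact this ▸ Submodule.add_mem _ hz' hw'
  | mul z w hz hw hz' hw' =>
      have : e (⟨z, hz⟩ * ⟨w, hw⟩ : Ralg δ) i = e ⟨z, hz⟩ i * e ⟨w, hw⟩ i := by
        rw [map_mul]; rfl
      exact this ▸ mul_mem_span_factorMonoid δ e i hz' hw'

theorem span_factorMonoid_eq_top {k : ℕ} {nn : Fin k → ℕ}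
    (e : Ralg δ →ₐ[ℂ] ∀ i : Fin k, Matrix (Fin (nn i)) (Fin (nn i)) ℂ)
    (he_surj : Function.Surjective e) (i : Fin k) :
    Submodule.span ℂ (factorMonoid δ e i) = ⊤ := by
  rw [eq_top_iff]
  intro X _
  obtain ⟨x, hx⟩ := he_surj (Function.update (0 : ∀ j, Matrix (Fin (nn j)) (Fin (nn j)) ℂ) i X)
  have h := theta_mem_span δ e i x
  rwa [hx, Function.update_self] at h

theorem exists_entry_ne_zero {n : ℕ} {g : Matrix (Fin n) (Fin n) ℂ} (h : g ≠ 0) :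
    ∃ p q, g p q ≠ 0 := by
  by_contra hc
  push_neg at hc
  exact h (by ext p q; exact hc p q)

theorem stdBasis_mul_mul {n : ℕ} (f : Matrix (Fin n) (Fin n) ℂ) (x p q y : Fin n) :
    Matrix.single x p 1 * f * Matrix.single q y 1
      = f p q • Matrix.single x y 1 := by
  ext a b
  by_cases hb : b = y
  · subst hb
    rw [Matrix.mul_single_apply_same]
    by_cases ha : a = x
    · subst ha
      rw [Matrix.single_mul_apply_same]
      simp [Matrix.single]
    · rw [Matrix.single_mul_apply_of_ne _ _ _ _ _ ha]
      simp [Matrix.single, Ne.symm ha, ha]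
  · rw [Matrix.mul_single_apply_of_ne _ _ _ _ _ hb]
    simp [Matrix.single, Ne.symm hb, hb]

theorem mul_stdBasis_mul_apply {n : ℕ} (g : Matrix (Fin n) (Fin n) ℂ) (p q : Fin n) :
    (g * Matrix.single q p 1 * g : Matrix (Fin n) (Fin n) ℂ) p q
      = g p q * g p q := by
  rw [Matrix.mul_apply, Finset.sum_eq_single p]
  · rw [Matrix.mul_single_apply_same, mul_one]
  · intro r _ hr
    rw [Matrix.mul_single_apply_of_ne _ _ _ _ _ hr, zero_mul]
  · intro h
    exact absurd (Finset.mem_univ p) h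

theorem exists_factor_sandwich {k : ℕ} {nn : Fin k → ℕ}
    (e : Ralg δ →ₐ[ℂ] ∀ i : Fin k, Matrix (Fin (nn i)) (Fin (nn i)) ℂ)
    (he_surj : Function.Surjective e) (i : Fin k) (u0 : List A)
    (hf : theta δ e u0 i ≠ 0)
    (g : Matrix (Fin (nn i)) (Fin (nn i)) ℂ) (hg : g ≠ 0) :
    ∃ a b : List A, g * theta δ e (a ++ u0 ++ b) i * g ≠ 0 := by
  classical
  by_contra hcon
  push_neg at hcon
  set S : Set (Matrix (Fin (nn i)) (Fin (nn i)) ℂ) :=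
    {y | ∃ a b : List A, y = theta δ e (a ++ u0 ++ b) i} with hS
  -- span of S is everything
  have hSpan : Submodule.span ℂ S = ⊤ := by
    obtain ⟨p0, q0, h00⟩ := exists_entry_ne_zero hf
    have hstd : ∀ x y : Fin (nn i), Matrix.single x y (1 : ℂ) ∈ Submodule.span ℂ S := by
      intro x y
      have hE1 : Matrix.single x p0 (1 : ℂ)
          ∈ Submodule.span ℂ (factorMonoid δ e i) := by
        rw [span_factorMonoid_eq_top δ e he_surj i]; trivial
      have hE2 : Matrix.single q0 y (1 : ℂ)
          ∈ Submodule.span ℂ (factorMonoid δ e i) := by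
        rw [span_factorMonoid_eq_top δ e he_surj i]; trivial
      have hfS : theta δ e u0 i ∈ Submodule.span ℂ S :=
        Submodule.subset_span ⟨[], [], by simp⟩
      have hm := Submodule.mul_mem_mul (Submodule.mul_mem_mul hE1 hfS) hE2
      rw [Submodule.span_mul_span, Submodule.span_mul_span] at hm
      have hsub : factorMonoid δ e i * S * factorMonoid δ e i ⊆ S := by
        rintro z ⟨z1, ⟨m1, hm1, s, hs, rfl⟩, m2, hm2, rfl⟩
        obtain ⟨c, rfl⟩ := hm1
        obtain ⟨a, b, rfl⟩ := hs
        obtain ⟨d, rfl⟩ := hm2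
        exact ⟨c ++ a, b ++ d, by simp [theta_append, List.append_assoc, mul_assoc]⟩
      have hm2 : Matrix.single x p0 (1 : ℂ) * theta δ e u0 i *
          Matrix.single q0 y (1 : ℂ) ∈ Submodule.span ℂ S :=
        Submodule.span_mono hsub hm
      rw [stdBasis_mul_mul] at hm2
      have hm3 := Submodule.smul_mem _ (theta δ e u0 i p0 q0)⁻¹ hm2
      rwa [smul_smul, inv_mul_cancel₀ h00, one_smul] at hm3
    rw [eq_top_iff]
    intro X _
    rw [Matrix.matrix_eq_sum_single X]
    refine Submodule.sum_mem _ fun p _ => Submodule.sum_mem _ fun q _ => ?_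
    have : Matrix.single p q (X p q) = X p q • Matrix.single p q (1 : ℂ) := by
      ext a b
      simp [Matrix.single]
    rw [this]
    exact Submodule.smul_mem _ _ (hstd p q)
  -- hence g * Y * g = 0 for all Y
  have hAll : ∀ Y : Matrix (Fin (nn i)) (Fin (nn i)) ℂ, g * Y * g = 0 := by
    intro Y
    have hY : Y ∈ Submodule.span ℂ S := by rw [hSpan]; trivial
    induction hY using Submodule.span_induction with
    | mem z hz =>
        obtain ⟨a, b, rfl⟩ := hz
        exact hcon a b
    | zero => simp
    | add z w _ _ hz hw => rw [mul_add, add_mul, hz, hw, add_zero]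
    | smul c z _ hz => rw [Matrix.mul_smul, Matrix.smul_mul, hz, smul_zero]
  obtain ⟨p, q, hpq⟩ := exists_entry_ne_zero hg
  have h1 := hAll (Matrix.single q p 1)
  have h2 : (g * Matrix.single q p 1 * g : Matrix (Fin (nn i)) (Fin (nn i)) ℂ) p q
      = 0 := by rw [h1]; rfl
  rw [mul_stdBasis_mul_apply] at h2
  exact hpq (mul_self_eq_zero.mp h2)

end AuxLemmas

theorem stmt17 {Q A : Type*} [Fintype Q] [DecidableEq Q] (δ : Q → A → Q)
    {k : ℕ} {nn : Fin k → ℕ}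
    (e : Ralg δ →ₐ[ℂ] ∀ i : Fin k, Matrix (Fin (nn i)) (Fin (nn i)) ℂ)
    (he_surj : Function.Surjective e)
    (he_ker : ∀ x : Ralg δ, e x = 0 ↔ (x : (Module.End ℂ (Wperp Q))ᵐᵒᵖ) ∈ RadSet δ)
    (Ii : ∀ i : Fin k, Set (Matrix (Fin (nn i)) (Fin (nn i)) ℂ))
    (hIi : ∀ i : Fin k, IsZeroMinimalIdeal (factorMonoid δ e i) (Ii i))
    (hIuniq : ∀ (i : Fin k) (J : Set (Matrix (Fin (nn i)) (Fin (nn i)) ℂ)),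
      IsZeroMinimalIdeal (factorMonoid δ e i) J → J = Ii i)
    (hk : 0 < k) (hn : 2 ≤ Fintype.card Q) (hsync : IsSynchronizing δ)
    (hss : IsSemisimple δ) :
    (Fs δ \ RadWords δ).Nonempty ∧
      sInf (Set.range fun i : Fin k => rnkIdeal δ e i (Ii i)) = formerRank δ := by
  classical
  have hss' : RadWords δ = SynWords δ := hss
  -- the defining set of the former rank is nonempty
  have hFne : {m | ∃ u : List A, ¬ IsReset δ u ∧ wordRank δ u = m}.Nonempty := by
    refine ⟨wordRank δ ([] : List A), ⟨[], ?_, rfl⟩⟩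
    intro h
    have hcard : wordRank δ ([] : List A) = Fintype.card Q := by
      simp [wordRank, imageSet, actW, Finset.card_univ]
    rw [IsReset, hcard] at h
    omega
  have hFr_mem := Nat.sInf_mem hFne
  obtain ⟨u0, hu0_nr, hu0_rank⟩ := hFr_mem
  have hu0_not_rad : u0 ∉ RadWords δ := by
    rw [hss']; exact hu0_nr
  have h1 : (Fs δ \ RadWords δ).Nonempty := ⟨u0, hu0_rank, hu0_not_rad⟩
  refine ⟨h1, ?_⟩
  -- a word with a nonzero theta-component has rank at least the former rank
  have hkey : ∀ (w : List A) (i : Fin k), theta δ e w i ≠ 0 →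
      formerRank δ ≤ wordRank δ w := by
    intro w i hw
    have hnr : ¬ IsReset δ w := by
      intro hr
      have hrad : w ∈ RadWords δ := by rw [hss']; exact hr
      have h0 : e (rhoR δ w) = 0 := (he_ker _).mpr hrad
      exact hw (by rw [theta, h0]; rfl)
    exact Nat.sInf_le ⟨w, hnr, rfl⟩
  -- every ideal Ii contains a nonzero element
  have hgex : ∀ i : Fin k, ∃ g ∈ Ii i, g ≠ 0 := by
    intro i
    by_contra hc
    push_neg at hc
    exact (hIi i).2.2.1
      (Set.eq_singleton_iff_unique_mem.mpr ⟨(hIi i).2.1, fun x hx => hc x hx⟩)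
  -- lower bound: every rnkIdeal is at least the former rank
  have hlow : ∀ i : Fin k, formerRank δ ≤ rnkIdeal δ e i (Ii i) := by
    intro i
    obtain ⟨g0, hg0I, hg0ne⟩ := hgex i
    refine le_csInf ⟨rnkElt δ e i g0, g0, hg0I, hg0ne, rfl⟩ ?_
    rintro m ⟨g, hgI, hgne, rfl⟩
    obtain ⟨v, hv⟩ := (hIi i).1.1 hgI
    have hTne : {m | ∃ u : List A, theta δ e u i = g ∧ wordRank δ u = m}.Nonempty :=
      ⟨wordRank δ v, v, hv, rfl⟩
    obtain ⟨w, hw, hwr⟩ := Nat.sInf_mem hTne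
    calc formerRank δ ≤ wordRank δ w := hkey w i (by rw [hw]; exact hgne)
      _ = rnkElt δ e i g := hwr
  -- upper bound at a suitable index j
  have hj : ∃ j : Fin k, theta δ e u0 j ≠ 0 := by
    by_contra hc
    push_neg at hc
    have h0 : e (rhoR δ u0) = 0 := by
      funext j; exact hc j
    exact hu0_not_rad ((he_ker _).mp h0)
  obtain ⟨j, hj0⟩ := hj
  obtain ⟨g, hgI, hgne⟩ := hgex j
  obtain ⟨a, b, hab⟩ := exists_factor_sandwich δ e he_surj j u0 hj0 g hgne
  obtain ⟨v, hv⟩ := (hIi j).1.1 hgI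
  have hv' : theta δ e v j = g := hv
  set w' : List A := v ++ (a ++ u0 ++ b) ++ v with hw'def
  have hθw' : theta δ e w' j = g * theta δ e (a ++ u0 ++ b) j * g := by
    rw [hw'def, theta_append, theta_append, hv']
  have hw'ne : theta δ e w' j ≠ 0 := by rw [hθw']; exact hab
  have hw'I : theta δ e w' j ∈ Ii j := by
    rw [hθw']
    have hy : theta δ e (a ++ u0 ++ b) j ∈ factorMonoid δ e j := ⟨_, rfl⟩
    have hc1 : g * theta δ e (a ++ u0 ++ b) j ∈ Ii j :=
      ((hIi j).1.2 _ hy g hgI).2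
    exact ((hIi j).1.2 g ((hIi j).1.1 hgI) _ hc1).2
  have hw'rank : wordRank δ w' ≤ formerRank δ := by
    have heq : w' = (v ++ a) ++ u0 ++ (b ++ v) := by
      simp [hw'def, List.append_assoc]
    calc wordRank δ w' = wordRank δ ((v ++ a) ++ u0 ++ (b ++ v)) := by rw [heq]
      _ ≤ wordRank δ u0 := wordRank_factor_le δ _ _ _
      _ = formerRank δ := hu0_rank
  have hup : rnkIdeal δ e j (Ii j) ≤ formerRank δ := by
    have h2 : rnkElt δ e j (theta δ e w' j) ≤ formerRank δ :=
      le_trans (Nat.sInf_le ⟨w', rfl, rfl⟩) hw'rank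
    exact le_trans (Nat.sInf_le ⟨theta δ e w' j, hw'I, hw'ne, rfl⟩) h2
  have hje : rnkIdeal δ e j (Ii j) = formerRank δ := le_antisymm hup (hlow j)
  apply le_antisymm
  · exact Nat.sInf_le ⟨j, hje⟩
  · refine le_csInf ⟨rnkIdeal δ e j (Ii j), j, rfl⟩ ?_
    rintro m ⟨i, rfl⟩
    exact hlow i

end
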